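/- Fix 2 ≤ i ≤ k. For every point x ∈ Z_{i−1}, with stabilizer G_x ≤ T^{i−1} and orbit [x] ∈ X_{i−1}, the fiber π_i^{−1}([x]) (with the subspace topology from X_i) is homeomorphic to the orbit space of S^{2n_i+1} under the action of G_x × S^1 in which (g, u) multiplies the coordinate z^i_α by u^{χ^i_α}·∏_{l<i} g_l^{c^i_{α,l}}. In particular, if G_x is trivial (a smooth point) the fiber is the weighted projective space ℂP^{n_i}_{χ^i} = S^{2n_i+1}/S^1 for the weighted circle action u·z = (u^{χ^i_0}z_0,…,u^{χ^i_{n_i}}z_{n_i}), and if G_x is a nontrivial finite group (a singular point) the fiber is the quotient of this weighted projective space by G_x (a fake weighted projective space). -/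

import Mathlib

noncomputable section

/-- The scalar by which `u ∈ T^i` multiplies the coordinate `z^j_α`:
`u_j^{χ^j_α} · ∏_{l<j} u_l^{c^j_{α,l}}`. -/
def torusScalar (n : ℕ → ℕ) (χ : (i : ℕ) → Fin (n i + 1) → ℕ)
    (c : (i : ℕ) → Fin (n i + 1) → ℕ → ℤ) {i : ℕ} (u : Fin i → Circle)
    (j : Fin i) (α : Fin (n j + 1)) : Circle :=
  u j ^ χ (j : ℕ) α * ∏ l : Fin i, if (l : ℕ) < (j : ℕ) then u l ^ c (j : ℕ) α (l : ℕ) else 1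

/-- The action of `T^i` on the ambient space `∏_{j<i} ℂ^{n_j+1}`. -/
def torusAct (n : ℕ → ℕ) (χ : (i : ℕ) → Fin (n i + 1) → ℕ)
    (c : (i : ℕ) → Fin (n i + 1) → ℕ → ℤ) {i : ℕ} (u : Fin i → Circle)
    (z : (j : Fin i) → Fin (n j + 1) → ℂ) : (j : Fin i) → Fin (n j + 1) → ℂ :=
  fun j α => (torusScalar n χ c u j α : ℂ) * z j α

/-- `Z_i = ∏_{j=1}^{i} S^{2n_j+1}`, the product of the unit spheres. -/
def Zset (n : ℕ → ℕ) (i : ℕ) : Set ((j : Fin i) → Fin (n j + 1) → ℂ) :=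
  {z | ∀ j : Fin i, ∑ α, Complex.normSq (z j α) = 1}

/-- The orbit equivalence relation of the `T^i`-action on `Z_i`. -/
def orbitRel (n : ℕ → ℕ) (χ : (i : ℕ) → Fin (n i + 1) → ℕ)
    (c : (i : ℕ) → Fin (n i + 1) → ℕ → ℤ) (i : ℕ) :
    Zset n i → Zset n i → Prop :=
  fun z z' => ∃ u : Fin i → Circle,
    torusAct n χ c u (z : (j : Fin i) → Fin (n j + 1) → ℂ)
      = (z' : (j : Fin i) → Fin (n j + 1) → ℂ)

/-- `X_i = Z_i / T^i`, with the quotient topology. -/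
abbrev Xsp (n : ℕ → ℕ) (χ : (i : ℕ) → Fin (n i + 1) → ℕ)
    (c : (i : ℕ) → Fin (n i + 1) → ℕ → ℤ) (i : ℕ) : Type :=
  Quot (orbitRel n χ c i)

/-- The projection `Z_{i+1} → Z_i` forgetting the last sphere coordinate. -/
def projZ (n : ℕ → ℕ) (i : ℕ) (z : Zset n (i + 1)) : Zset n i :=
  ⟨fun j α => (z : (j : Fin (i + 1)) → Fin (n j + 1) → ℂ) ⟨j.1, Nat.lt_succ_of_lt j.2⟩ α,
    fun j => z.2 ⟨j.1, Nat.lt_succ_of_lt j.2⟩⟩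

/-- The unit sphere `S^{2d+1} ⊆ ℂ^{d+1}`. -/
def sphereSet (d : ℕ) : Set (Fin (d + 1) → ℂ) :=
  {w | ∑ α, Complex.normSq (w α) = 1}

/-- The scalar by which `(g, u) ∈ G_x × S^1` multiplies the coordinate `z^i_α` of the
fiber sphere: `u^{χ^i_α} · ∏_{l<i} g_l^{c^i_{α,l}}` (here the fiber sphere is the block
of index `m = i - 1` in the `0`-based indexing). -/
def fiberScalar (n : ℕ → ℕ) (χ : (i : ℕ) → Fin (n i + 1) → ℕ)
    (c : (i : ℕ) → Fin (n i + 1) → ℕ → ℤ) (m : ℕ) (g : Fin m → Circle) (u : Circle)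
    (α : Fin (n m + 1)) : Circle :=
  u ^ χ m α * ∏ l : Fin m, g l ^ c m α (l : ℕ)

/-- The orbit relation on the fiber sphere `S^{2n_i+1}` of the action of `G_x × S^1`,
where `G_x ≤ T^{i-1}` is the stabilizer of `x ∈ Z_{i-1}`. -/
def fiberRel (n : ℕ → ℕ) (χ : (i : ℕ) → Fin (n i + 1) → ℕ)
    (c : (i : ℕ) → Fin (n i + 1) → ℕ → ℤ) (m : ℕ) (x : Zset n m) :
    sphereSet (n m) → sphereSet (n m) → Prop :=
  fun w w' => ∃ g : Fin m → Circle,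
    torusAct n χ c g (x : (j : Fin m) → Fin (n j + 1) → ℂ)
        = (x : (j : Fin m) → Fin (n j + 1) → ℂ) ∧
      ∃ u : Circle, ∀ α, (fiberScalar n χ c m g u α : ℂ) * (w : Fin (n m + 1) → ℂ) α
        = (w' : Fin (n m + 1) → ℂ) α

namespace FiberAux

open Relation

variable (n : ℕ → ℕ) (χ : (i : ℕ) → Fin (n i + 1) → ℕ)
    (c : (i : ℕ) → Fin (n i + 1) → ℕ → ℤ)

lemma torusScalar_mul {i : ℕ} (u v : Fin i → Circle) (j : Fin i) (α : Fin (n j + 1)) :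
    torusScalar n χ c (u * v) j α = torusScalar n χ c u j α * torusScalar n χ c v j α := by
  unfold torusScalar
  rw [show (∏ l : Fin i, if (l : ℕ) < (j : ℕ) then (u * v) l ^ c (j : ℕ) α (l : ℕ) else 1)
      = ∏ l : Fin i, ((if (l : ℕ) < (j : ℕ) then u l ^ c (j : ℕ) α (l : ℕ) else 1) *
          (if (l : ℕ) < (j : ℕ) then v l ^ c (j : ℕ) α (l : ℕ) else 1)) from
    Finset.prod_congr rfl fun l _ => by split_ifs with h <;> simp [mul_zpow],
    Finset.prod_mul_distrib]
  simp only [Pi.mul_apply, mul_pow]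
  exact mul_mul_mul_comm _ _ _ _

lemma torusScalar_one {i : ℕ} (j : Fin i) (α : Fin (n j + 1)) :
    torusScalar n χ c (1 : Fin i → Circle) j α = 1 := by
  simp [torusScalar]

lemma torusAct_mul {i : ℕ} (u v : Fin i → Circle) (z : (j : Fin i) → Fin (n j + 1) → ℂ) :
    torusAct n χ c (u * v) z = torusAct n χ c u (torusAct n χ c v z) := by
  funext j α
  simp [torusAct, torusScalar_mul, mul_assoc]

lemma torusAct_one {i : ℕ} (z : (j : Fin i) → Fin (n j + 1) → ℂ) :
    torusAct n χ c (1 : Fin i → Circle) z = z := by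
  funext j α
  simp [torusAct, torusScalar_one]

lemma torusAct_mem {i : ℕ} (u : Fin i → Circle) {z : (j : Fin i) → Fin (n j + 1) → ℂ}
    (hz : z ∈ Zset n i) : torusAct n χ c u z ∈ Zset n i := by
  intro j
  simp only [torusAct, Complex.normSq_mul, Circle.normSq_coe, one_mul]
  exact hz j

lemma orbitRel_equiv (i : ℕ) : Equivalence (orbitRel n χ c i) := by
  constructor
  · exact fun z => ⟨1, torusAct_one n χ c _⟩
  · rintro z z' ⟨u, hu⟩
    exact ⟨u⁻¹, by rw [← hu, ← torusAct_mul, inv_mul_cancel, torusAct_one]⟩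
  · rintro a b d ⟨u, hu⟩ ⟨v, hv⟩
    exact ⟨v * u, by rw [torusAct_mul, hu, hv]⟩

lemma quot_eq_iff {i : ℕ} (z z' : Zset n i) :
    Quot.mk (orbitRel n χ c i) z = Quot.mk (orbitRel n χ c i) z' ↔ orbitRel n χ c i z z' := by
  rw [Quot.eq, (orbitRel_equiv n χ c i).eqvGen_iff]

end FiberAux
namespace FiberAux

variable (n : ℕ → ℕ) (χ : (i : ℕ) → Fin (n i + 1) → ℕ)
    (c : (i : ℕ) → Fin (n i + 1) → ℕ → ℤ)

lemma torusScalar_castSucc {m : ℕ} (u : Fin (m + 1) → Circle) (j : Fin m)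
    (α : Fin (n (j : ℕ) + 1)) :
    torusScalar n χ c u (Fin.castSucc j) α
      = torusScalar n χ c (fun l => u (Fin.castSucc l)) j α := by
  unfold torusScalar
  congr 1
  rw [Fin.prod_univ_castSucc]
  simp only [Fin.coe_castSucc, Fin.val_last]
  rw [if_neg (Nat.not_lt.2 (le_of_lt j.isLt)), mul_one]

lemma torusScalar_last {m : ℕ} (u : Fin (m + 1) → Circle) (α : Fin (n m + 1)) :
    torusScalar n χ c u (Fin.last m) α
      = fiberScalar n χ c m (fun l => u (Fin.castSucc l)) (u (Fin.last m)) α := by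
  unfold torusScalar fiberScalar
  congr 1
  rw [Fin.prod_univ_castSucc]
  simp only [Fin.coe_castSucc, Fin.val_last]
  rw [if_neg (lt_irrefl m), mul_one]
  exact Finset.prod_congr rfl fun l _ => if_pos l.isLt

/-- Extend `x : ℂ^{n_0+1} × ⋯ × ℂ^{n_{m-1}+1}` by a last block `w : ℂ^{n_m+1}`. -/
def extFun {m : ℕ} (x : (j : Fin m) → Fin (n (j : ℕ) + 1) → ℂ) (w : Fin (n m + 1) → ℂ) :
    (j : Fin (m + 1)) → Fin (n (j : ℕ) + 1) → ℂ :=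
  Fin.lastCases w x

@[simp] lemma extFun_castSucc {m : ℕ} (x : (j : Fin m) → Fin (n (j : ℕ) + 1) → ℂ)
    (w : Fin (n m + 1) → ℂ) (j : Fin m) : extFun n x w (Fin.castSucc j) = x j :=
  Fin.lastCases_castSucc ..

@[simp] lemma extFun_last {m : ℕ} (x : (j : Fin m) → Fin (n (j : ℕ) + 1) → ℂ)
    (w : Fin (n m + 1) → ℂ) : extFun n x w (Fin.last m) = w :=
  Fin.lastCases_last ..

lemma extFun_mem {m : ℕ} {x : (j : Fin m) → Fin (n (j : ℕ) + 1) → ℂ} (hx : x ∈ Zset n m)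
    {w : Fin (n m + 1) → ℂ} (hw : w ∈ sphereSet (n m)) : extFun n x w ∈ Zset n (m + 1) := by
  intro j
  induction j using Fin.lastCases with
  | last => simp only [extFun_last]; exact hw
  | cast j => simp only [extFun_castSucc]; exact hx j

end FiberAux
namespace FiberAux

variable (n : ℕ → ℕ) (χ : (i : ℕ) → Fin (n i + 1) → ℕ)
    (c : (i : ℕ) → Fin (n i + 1) → ℕ → ℤ)

/-- The action on `Zset` as a self-map of the subtype. -/
def actZ {i : ℕ} (u : Fin i → Circle) (z : Zset n i) : Zset n i :=
  ⟨torusAct n χ c u z.1, torusAct_mem n χ c u z.2⟩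

lemma continuous_torusScalar {i : ℕ} (j : Fin i) (α : Fin (n (j : ℕ) + 1)) :
    Continuous (fun u : Fin i → Circle => torusScalar n χ c u j α) := by
  apply Continuous.mul
  · exact (continuous_apply j).pow _
  · apply continuous_finset_prod
    intro l _
    split_ifs
    · exact (continuous_apply l).zpow _
    · exact continuous_const

lemma continuous_torusAct {i : ℕ} :
    Continuous (fun p : (Fin i → Circle) × (Zset n i) => torusAct n χ c p.1 p.2.1) := by
  apply continuous_pi; intro j
  apply continuous_pi; intro α
  apply Continuous.mul
  · exact continuous_subtype_val.comp
      ((continuous_torusScalar n χ c j α).comp continuous_fst)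
  · exact (continuous_apply α).comp ((continuous_apply j).comp
      (continuous_subtype_val.comp continuous_snd))

lemma isCompact_sphereSet (d : ℕ) : IsCompact (sphereSet d) := by
  have hcont : Continuous (fun w : Fin (d + 1) → ℂ => ∑ α, Complex.normSq (w α)) := by
    apply continuous_finset_sum
    intro α _
    exact Complex.continuous_normSq.comp (continuous_apply α)
  have hclosed : IsClosed (sphereSet d) := isClosed_eq hcont continuous_const
  have hbdd : sphereSet d ⊆ Metric.closedBall 0 1 := by
    intro w hw
    rw [Metric.mem_closedBall, dist_zero_right]
    apply pi_norm_le_iff_of_nonneg zero_le_one |>.mpr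
    intro α
    have h1 : Complex.normSq (w α) ≤ 1 := by
      rw [← hw]
      exact Finset.single_le_sum (fun i _ => Complex.normSq_nonneg _) (Finset.mem_univ α)
    rw [← Complex.sq_norm] at h1
    nlinarith [norm_nonneg (w α)]
  exact Metric.isCompact_of_isClosed_isBounded hclosed
    (Metric.isBounded_closedBall.subset hbdd)

lemma isCompact_Zset (i : ℕ) : IsCompact (Zset n i) := by
  have : Zset n i = Set.pi Set.univ (fun j : Fin i => sphereSet (n (j : ℕ))) := by
    ext z
    simp [Zset, sphereSet, Set.mem_pi]
  rw [this]
  exact isCompact_univ_pi fun j => isCompact_sphereSet (n (j : ℕ))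

lemma continuous_actZ {i : ℕ} (u : Fin i → Circle) : Continuous (actZ n χ c u) :=
  Continuous.subtype_mk
    ((continuous_torusAct n χ c).comp (continuous_const.prodMk continuous_id)) _

lemma actZ_homeomorph {i : ℕ} (u : Fin i → Circle) : IsOpenMap (actZ n χ c u) := by
  have h : ∀ v w : Fin i → Circle, ∀ z : Zset n i, actZ n χ c v (actZ n χ c w z)
      = actZ n χ c (v * w) z := by
    intro v w z; exact Subtype.ext (torusAct_mul n χ c v w z.1).symm
  exact (Homeomorph.mk
    ⟨actZ n χ c u, actZ n χ c u⁻¹,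
      fun z => by rw [h, inv_mul_cancel]; exact Subtype.ext (torusAct_one n χ c z.1),
      fun z => by rw [h, mul_inv_cancel]; exact Subtype.ext (torusAct_one n χ c z.1)⟩
    (continuous_actZ n χ c u) (continuous_actZ n χ c u⁻¹)).isOpenMap

lemma isOpenMap_quot (i : ℕ) : IsOpenMap (Quot.mk (orbitRel n χ c i)) := by
  intro U hU
  rw [← isQuotientMap_quot_mk.isOpen_preimage]
  have : Quot.mk (orbitRel n χ c i) ⁻¹' (Quot.mk (orbitRel n χ c i) '' U)
      = ⋃ u : Fin i → Circle, actZ n χ c u '' U := by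
    ext z
    simp only [Set.mem_preimage, Set.mem_image, Set.mem_iUnion]
    constructor
    · rintro ⟨z', hz', hq⟩
      obtain ⟨u, hu⟩ := (quot_eq_iff n χ c z' z).mp hq
      exact ⟨u, z', hz', Subtype.ext hu⟩
    · rintro ⟨u, z', hz', rfl⟩
      exact ⟨z', hz', (quot_eq_iff n χ c z' (actZ n χ c u z')).mpr ⟨u, rfl⟩⟩
  rw [this]
  exact isOpen_iUnion fun u => actZ_homeomorph n χ c u U hU

lemma isClosed_rel (i : ℕ) :
    haveI : CompactSpace (Zset n i) := isCompact_iff_compactSpace.mp (isCompact_Zset n i)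
    IsClosed {p : (Zset n i) × (Zset n i) | orbitRel n χ c i p.1 p.2} := by
  have hrange : {p : (Zset n i) × (Zset n i) | orbitRel n χ c i p.1 p.2}
      = Set.range (fun q : (Fin i → Circle) × (Zset n i) => (q.2, actZ n χ c q.1 q.2)) := by
    ext ⟨z, z'⟩
    simp only [Set.mem_setOf_eq, Set.mem_range, Prod.mk.injEq]
    constructor
    · rintro ⟨u, hu⟩; exact ⟨(u, z), rfl, Subtype.ext hu⟩
    · rintro ⟨⟨u, w⟩, rfl, rfl⟩; exact ⟨u, rfl⟩
  rw [hrange]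
  have hc : Continuous (fun q : (Fin i → Circle) × (Zset n i) => (q.2, actZ n χ c q.1 q.2)) :=
    continuous_snd.prodMk
      (Continuous.subtype_mk (continuous_torusAct n χ c) _)
  haveI : CompactSpace (Zset n i) := isCompact_iff_compactSpace.mp (isCompact_Zset n i)
  exact (isCompact_range hc).isClosed

lemma t2_Xsp (i : ℕ) : T2Space (Xsp n χ c i) := by
  constructor
  intro a b hab
  obtain ⟨z, rfl⟩ := Quot.exists_rep a
  obtain ⟨z', rfl⟩ := Quot.exists_rep b
  have hnr : ¬ orbitRel n χ c i z z' := fun h => hab (Quot.sound h)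
  obtain ⟨U, V, hUo, hVo, hzU, hzV, hUV⟩ :=
    isOpen_prod_iff.mp (isClosed_rel n χ c i).isOpen_compl z z' hnr
  refine ⟨Quot.mk _ '' U, Quot.mk _ '' V, isOpenMap_quot n χ c i U hUo,
    isOpenMap_quot n χ c i V hVo, ⟨z, hzU, rfl⟩, ⟨z', hzV, rfl⟩, ?_⟩
  rw [Set.disjoint_left]
  rintro p ⟨w, hwU, rfl⟩ ⟨w', hwV, hq⟩
  exact hUV (Set.mk_mem_prod hwU hwV)
    ((orbitRel_equiv n χ c i).symm ((quot_eq_iff n χ c w' w).mp hq))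

end FiberAux
namespace FiberAux

variable (n : ℕ → ℕ) (χ : (i : ℕ) → Fin (n i + 1) → ℕ)
    (c : (i : ℕ) → Fin (n i + 1) → ℕ → ℤ)

/-- Inclusion of the fiber sphere into `Z_{m+1}` over a fixed `x ∈ Z_m`. -/
def inc {m : ℕ} (x : Zset n m) (w : sphereSet (n m)) : Zset n (m + 1) :=
  ⟨extFun n x.1 w.1, extFun_mem n x.2 w.2⟩

lemma projZ_inc {m : ℕ} (x : Zset n m) (w : sphereSet (n m)) :
    projZ n m (inc n x w) = x := by
  apply Subtype.ext
  funext j α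
  show extFun n x.1 w.1 (Fin.castSucc j) α = x.1 j α
  rw [extFun_castSucc]

lemma inc_rel {m : ℕ} (x : Zset n m) {w w' : sphereSet (n m)}
    (h : fiberRel n χ c m x w w') :
    orbitRel n χ c (m + 1) (inc n x w) (inc n x w') := by
  obtain ⟨g, hg, u, hu⟩ := h
  refine ⟨(Fin.snoc g u : Fin (m + 1) → Circle), ?_⟩
  have hsnoc : (fun l : Fin m => (Fin.snoc g u : Fin (m + 1) → Circle) (Fin.castSucc l)) = g := by
    funext l; simp
  funext j
  induction j using Fin.lastCases with
  | last =>
      funext α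
      show (torusScalar n χ c ((Fin.snoc g u : Fin (m + 1) → Circle)) (Fin.last m) α : ℂ)
          * extFun n x.1 w.1 (Fin.last m) α = extFun n x.1 w'.1 (Fin.last m) α
      rw [torusScalar_last, hsnoc, Fin.snoc_last, extFun_last, extFun_last]
      exact hu α
  | cast j =>
      funext α
      show (torusScalar n χ c ((Fin.snoc g u : Fin (m + 1) → Circle)) (Fin.castSucc j) α : ℂ)
          * extFun n x.1 w.1 (Fin.castSucc j) α = extFun n x.1 w'.1 (Fin.castSucc j) α
      rw [torusScalar_castSucc, hsnoc, extFun_castSucc, extFun_castSucc]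
      exact congrFun (congrFun hg j) α

lemma rel_of_inc {m : ℕ} (x : Zset n m) {w w' : sphereSet (n m)}
    (h : orbitRel n χ c (m + 1) (inc n x w) (inc n x w')) :
    fiberRel n χ c m x w w' := by
  obtain ⟨u', hu'⟩ := h
  refine ⟨fun l => u' (Fin.castSucc l), ?_, u' (Fin.last m), ?_⟩
  · funext j α
    have h1 := congrFun (congrFun hu' (Fin.castSucc j)) α
    show (torusScalar n χ c (fun l => u' (Fin.castSucc l)) j α : ℂ) * x.1 j α = x.1 j α
    have h2 : (torusScalar n χ c u' (Fin.castSucc j) α : ℂ)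
        * extFun n x.1 w.1 (Fin.castSucc j) α = extFun n x.1 w'.1 (Fin.castSucc j) α := h1
    rw [torusScalar_castSucc, extFun_castSucc, extFun_castSucc] at h2
    exact h2
  · intro α
    have h1 := congrFun (congrFun hu' (Fin.last m)) α
    have h2 : (torusScalar n χ c u' (Fin.last m) α : ℂ)
        * extFun n x.1 w.1 (Fin.last m) α = extFun n x.1 w'.1 (Fin.last m) α := h1
    rw [torusScalar_last, extFun_last, extFun_last] at h2
    exact h2

lemma continuous_inc {m : ℕ} (x : Zset n m) : Continuous (inc n x) := by
  apply Continuous.subtype_mk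
  apply continuous_pi
  intro j
  induction j using Fin.lastCases with
  | last =>
      have h : (fun w : sphereSet (n m) => extFun n x.1 w.1 (Fin.last m))
          = fun w : sphereSet (n m) => w.1 := by
        funext w; exact extFun_last ..
      exact h ▸ continuous_subtype_val
  | cast j =>
      have h : (fun w : sphereSet (n m) => extFun n x.1 w.1 (Fin.castSucc j))
          = fun _ => x.1 j := by
        funext w; exact extFun_castSucc ..
      exact h ▸ continuous_const

lemma surj_aux {m : ℕ} (x : Zset n m) (z : Zset n (m + 1))
    (h : orbitRel n χ c m (projZ n m z) x) :
    ∃ w : sphereSet (n m),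
      Quot.mk (orbitRel n χ c (m + 1)) (inc n x w)
        = Quot.mk (orbitRel n χ c (m + 1)) z := by
  obtain ⟨u, hu⟩ := h
  set u' : Fin (m + 1) → Circle := (Fin.snoc u 1 : Fin (m + 1) → Circle) with hu'def
  have hsnoc : (fun l : Fin m => u' (Fin.castSucc l)) = u := by
    funext l; simp [hu'def]
  set z' : Zset n (m + 1) := ⟨torusAct n χ c u' z.1, torusAct_mem n χ c u' z.2⟩ with hz'def
  have hw : (fun α => z'.1 (Fin.last m) α) ∈ sphereSet (n m) := z'.2 (Fin.last m)
  refine ⟨⟨fun α => z'.1 (Fin.last m) α, hw⟩, ?_⟩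
  have hinc : inc n x ⟨fun α => z'.1 (Fin.last m) α, hw⟩ = z' := by
    apply Subtype.ext
    funext j
    induction j using Fin.lastCases with
    | last =>
        funext α
        show extFun n x.1 _ (Fin.last m) α = z'.1 (Fin.last m) α
        rw [extFun_last]
    | cast j =>
        funext α
        show extFun n x.1 _ (Fin.castSucc j) α = z'.1 (Fin.castSucc j) α
        rw [extFun_castSucc]
        have h2 : z'.1 (Fin.castSucc j) α
            = (torusScalar n χ c u' (Fin.castSucc j) α : ℂ) * z.1 (Fin.castSucc j) α := rfl
        rw [h2, torusScalar_castSucc, hsnoc]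
        exact (congrFun (congrFun hu j) α).symm
  rw [hinc]
  exact ((quot_eq_iff n χ c z z').mpr ⟨u', rfl⟩).symm

end FiberAux
open FiberAux

/-- Fibers of `π_i : X_i → X_{i-1}` (here `i = m + 1`, `1 ≤ m`): for every `x ∈ Z_{i-1}`
with stabilizer `G_x ≤ T^{i-1}`, the fiber `π_i⁻¹([x])`, with the subspace topology,
is homeomorphic to the orbit space of the sphere `S^{2n_i+1}` under the action of
`G_x × S^1` in which `(g,u)` multiplies `z^i_α` by `u^{χ^i_α} ∏_{l<i} g_l^{c^i_{α,l}}`.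
In particular it is a weighted projective space at smooth points and a fake weighted
projective space at singular points. -/
theorem fiber_homeomorph_orbit_space
    (k m : ℕ) (hm : 1 ≤ m) (hmk : m + 1 ≤ k)
    (n : ℕ → ℕ) (hn : ∀ i, i < k → 1 ≤ n i)
    (χ : (i : ℕ) → Fin (n i + 1) → ℕ) (hχpos : ∀ i, i < k → ∀ α, 0 < χ i α)
    (c : (i : ℕ) → Fin (n i + 1) → ℕ → ℤ)
    (π : Xsp n χ c (m + 1) → Xsp n χ c m)
    (hπ : ∀ z : Zset n (m + 1),
      π (Quot.mk (orbitRel n χ c (m + 1)) z) = Quot.mk (orbitRel n χ c m) (projZ n m z))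
    (x : Zset n m) :
    Nonempty (({p : Xsp n χ c (m + 1) // π p = Quot.mk (orbitRel n χ c m) x}) ≃ₜ
      Quot (fiberRel n χ c m x)) := by
  classical
  let Fhat : sphereSet (n m) → {p : Xsp n χ c (m + 1) // π p = Quot.mk (orbitRel n χ c m) x} :=
    fun w => ⟨Quot.mk (orbitRel n χ c (m + 1)) (inc n x w), by
      rw [hπ (inc n x w), projZ_inc]⟩
  have hwd : ∀ w w', fiberRel n χ c m x w w' → Fhat w = Fhat w' := fun w w' h =>
    Subtype.ext (Quot.sound (inc_rel n χ c x h))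
  let F : Quot (fiberRel n χ c m x) →
      {p : Xsp n χ c (m + 1) // π p = Quot.mk (orbitRel n χ c m) x} :=
    Quot.lift Fhat hwd
  have hFcont : Continuous F := continuous_quot_lift hwd
    (Continuous.subtype_mk (continuous_quot_mk.comp (continuous_inc n x)) _)
  have hFbij : Function.Bijective F := by
    constructor
    · intro a b hab
      obtain ⟨w, rfl⟩ := Quot.exists_rep a
      obtain ⟨w', rfl⟩ := Quot.exists_rep b
      apply Quot.sound
      apply rel_of_inc n χ c x
      have hq : Quot.mk (orbitRel n χ c (m + 1)) (inc n x w)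
          = Quot.mk (orbitRel n χ c (m + 1)) (inc n x w') := by
        have h2 := congrArg Subtype.val hab
        simpa only [F, Fhat] using h2
      exact (quot_eq_iff n χ c _ _).mp hq
    · intro p
      obtain ⟨z, hz⟩ := Quot.exists_rep p.1
      have hrel : orbitRel n χ c m (projZ n m z) x := by
        apply (quot_eq_iff n χ c _ _).mp
        have h1 := hπ z
        rw [hz] at h1
        exact h1.symm.trans p.2
      obtain ⟨w, hw⟩ := surj_aux n χ c x z hrel
      refine ⟨Quot.mk _ w, Subtype.ext ?_⟩
      show (F (Quot.mk (fiberRel n χ c m x) w)).1 = p.1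
      simp only [F, Fhat]
      exact hw.trans hz
  haveI : CompactSpace (sphereSet (n m)) :=
    isCompact_iff_compactSpace.mp (isCompact_sphereSet (n m))
  haveI : T2Space (Xsp n χ c (m + 1)) := t2_Xsp n χ c (m + 1)
  exact ⟨(Continuous.homeoOfEquivCompactToT2 (f := Equiv.ofBijective F hFbij) hFcont).symm⟩
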